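/- arXiv:2407.19267 — 3 statements merged into one kernel-verified Lean document; each statement's English description precedes it below -/
import Mathlib

section
/- Let (A,B1,B2,a,b) be a triangle of dimension (v1,v2), i.e. A : C^{v1} → C^{v2}, B1 ∈ End(C^{v1}), B2 ∈ End(C^{v2}), b : C^{v1} → C, a : C → C^{v2} satisfying B2∘A − A∘B1 + a∘b = 0, such that there is no nonzero B1-invariant subspace S ⊆ C^{v1} with A(S) = 0 and b(S) = 0, and no proper B2-invariant subspace T ⊊ C^{v2} containing Im A + Im a. Then A has full rank, i.e. rank A = min(v1, v2). -/
/-- A triangle `(A, B1, B2, a, b)` of dimension `(v1, v2)` satisfying the triangle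
equation and the stability conditions (S1), (S2) has full rank `A`. -/
theorem stmt0 (v1 v2 : ℕ)
    (A : (Fin v1 → ℂ) →ₗ[ℂ] (Fin v2 → ℂ))
    (B1 : Module.End ℂ (Fin v1 → ℂ)) (B2 : Module.End ℂ (Fin v2 → ℂ))
    (b : (Fin v1 → ℂ) →ₗ[ℂ] ℂ) (a : ℂ →ₗ[ℂ] (Fin v2 → ℂ))
    (htri : B2 ∘ₗ A - A ∘ₗ B1 + a ∘ₗ b = 0)
    (hS1 : ∀ S : Submodule ℂ (Fin v1 → ℂ), S.map B1 ≤ S →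
      S.map A = ⊥ → S.map b = ⊥ → S = ⊥)
    (hS2 : ∀ T : Submodule ℂ (Fin v2 → ℂ), T.map B2 ≤ T →
      LinearMap.range A ⊔ LinearMap.range a ≤ T → T = ⊤) :
    Module.finrank ℂ (LinearMap.range A) = min v1 v2 := by
  classical
  set a0 : Fin v2 → ℂ := a 1 with ha0
  have ha : ∀ c : ℂ, a c = c • a0 := by
    intro c
    rw [ha0, ← map_smul, smul_eq_mul, mul_one]
  have hrel : ∀ y, A (B1 y) = B2 (A y) + (b y) • a0 := by
    intro y
    have h := LinearMap.congr_fun htri y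
    simp only [LinearMap.add_apply, LinearMap.sub_apply, LinearMap.comp_apply,
      LinearMap.zero_apply] at h
    rw [ha (b y)] at h
    rw [sub_add_eq_add_sub, sub_eq_zero] at h
    exact h.symm
  have hrank : Module.finrank ℂ (LinearMap.range A) + Module.finrank ℂ (LinearMap.ker A)
      = v1 := by
    have := LinearMap.finrank_range_add_finrank_ker A
    simpa using this
  have hle2 : Module.finrank ℂ (LinearMap.range A) ≤ v2 := by
    have := Submodule.finrank_le (LinearMap.range A)
    simpa using this
  by_cases hker : LinearMap.ker A = ⊥
  · -- injective case
    rw [hker] at hrank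
    simp at hrank
    rw [hrank]
    exact (Nat.min_eq_left (hrank ▸ hle2)).symm
  · -- noninjective case
    obtain ⟨x, hx, hx0⟩ := Submodule.exists_mem_ne_zero_of_ne_bot hker
    have hAx : A x = 0 := hx
    -- there exists n with b (B1^n x) ≠ 0
    have hexists : ∃ n, b ((B1 ^ n) x) ≠ 0 := by
      by_contra hall
      push_neg at hall
      set S : Submodule ℂ (Fin v1 → ℂ) :=
        Submodule.span ℂ (Set.range fun k => (B1 ^ k) x) with hS
      have hAk : ∀ k, A ((B1 ^ k) x) = 0 := by
        intro k
        induction k with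
        | zero => simpa using hAx
        | succ k ih =>
          have : (B1 ^ (k + 1)) x = B1 ((B1 ^ k) x) := by
            rw [pow_succ']; rfl
          rw [this, hrel, ih, hall k]
          simp
      have hSB : S.map B1 ≤ S := by
        rw [hS, Submodule.map_span, Submodule.span_le]
        rintro _ ⟨_, ⟨k, rfl⟩, rfl⟩
        have : B1 ((B1 ^ k) x) = (B1 ^ (k + 1)) x := by rw [pow_succ']; rfl
        rw [this]
        exact Submodule.subset_span ⟨k + 1, rfl⟩
      have hSA : S.map A = ⊥ := by
        rw [hS, Submodule.map_span, Submodule.span_eq_bot]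
        rintro _ ⟨_, ⟨k, rfl⟩, rfl⟩
        exact hAk k
      have hSb : S.map b = ⊥ := by
        rw [hS, Submodule.map_span, Submodule.span_eq_bot]
        rintro _ ⟨_, ⟨k, rfl⟩, rfl⟩
        exact hall k
      have hSbot := hS1 S hSB hSA hSb
      apply hx0
      have hxS : x ∈ S := by
        apply Submodule.subset_span
        exact ⟨0, by simp⟩
      rw [hSbot] at hxS
      simpa using hxS
    set n := Nat.find hexists with hn
    have hbn : b ((B1 ^ n) x) ≠ 0 := Nat.find_spec hexists
    have hmin : ∀ j < n, b ((B1 ^ j) x) = 0 := by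
      intro j hj
      have := Nat.find_min hexists hj
      simpa using this
    -- A (B1^k x) = 0 for k ≤ n
    have hAk : ∀ k ≤ n, A ((B1 ^ k) x) = 0 := by
      intro k hk
      induction k with
      | zero => simpa using hAx
      | succ k ih =>
        have hk' : k ≤ n := Nat.le_of_succ_le hk
        have : (B1 ^ (k + 1)) x = B1 ((B1 ^ k) x) := by rw [pow_succ']; rfl
        rw [this, hrel, ih hk', hmin k (Nat.lt_of_succ_le hk)]
        simp
    -- a0 ∈ range A
    have ha0mem : a0 ∈ LinearMap.range A := by
      have h1 : A (B1 ((B1 ^ n) x)) = (b ((B1 ^ n) x)) • a0 := by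
        rw [hrel, hAk n le_rfl]
        simp
      have : a0 = A ((b ((B1 ^ n) x))⁻¹ • B1 ((B1 ^ n) x)) := by
        rw [map_smul, h1, smul_smul, inv_mul_cancel₀ hbn, one_smul]
      exact ⟨_, this.symm⟩
    -- range A is B2-invariant and contains range a
    have hTB : (LinearMap.range A).map B2 ≤ LinearMap.range A := by
      rintro _ ⟨_, ⟨y, rfl⟩, rfl⟩
      have : B2 (A y) = A (B1 y) - (b y) • a0 := by rw [hrel]; abel
      rw [this]
      exact Submodule.sub_mem _ ⟨B1 y, rfl⟩ (Submodule.smul_mem _ _ ha0mem)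
    have hTa : LinearMap.range A ⊔ LinearMap.range a ≤ LinearMap.range A := by
      apply sup_le le_rfl
      rintro _ ⟨c, rfl⟩
      rw [ha c]
      exact Submodule.smul_mem _ _ ha0mem
    have hTop : LinearMap.range A = ⊤ := hS2 _ hTB hTa
    have hrv2 : Module.finrank ℂ (LinearMap.range A) = v2 := by
      rw [hTop]
      simp
    have hkpos : 0 < Module.finrank ℂ (LinearMap.ker A) := by
      have : Nontrivial (LinearMap.ker A) := Submodule.nontrivial_iff_ne_bot.mpr hker
      exact Module.finrank_pos
    have : v2 < v1 := by omega
    rw [hrv2, Nat.min_eq_right (le_of_lt this)]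
end

section
/- There do not exist matrices B^- ∈ End(C^5), C : C^2 → C^5, D : C^5 → C^2, A : C^5 → C^2, b : (C^5)* (i.e. b : C^5 → C), a ∈ C^2 and B^+ ∈ End(C^2) satisfying all of: (a) B^+ A − A B^- + a b = 0; (S1) every B^- -invariant subspace contained in Ker A ∩ Ker b is zero; (S2) A is surjective; (I) C D + B^- = 0; (II) D C = 0; (III) B^+ = 0. -/
/-- The bow variety of Example 5.7 is empty: no data with the given
moment-map and stability conditions exists. -/
theorem stmt5 :
    ¬ ∃ (Bm : Module.End ℂ (Fin 5 → ℂ))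
        (C : (Fin 2 → ℂ) →ₗ[ℂ] (Fin 5 → ℂ))
        (D : (Fin 5 → ℂ) →ₗ[ℂ] (Fin 2 → ℂ))
        (A : (Fin 5 → ℂ) →ₗ[ℂ] (Fin 2 → ℂ))
        (b : (Fin 5 → ℂ) →ₗ[ℂ] ℂ)
        (a : ℂ →ₗ[ℂ] (Fin 2 → ℂ))
        (Bp : Module.End ℂ (Fin 2 → ℂ)),
      (Bp ∘ₗ A - A ∘ₗ Bm + a ∘ₗ b = 0) ∧
      (∀ S : Submodule ℂ (Fin 5 → ℂ), S.map Bm ≤ S →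
        S.map A = ⊥ → S.map b = ⊥ → S = ⊥) ∧
      Function.Surjective A ∧
      (C ∘ₗ D + Bm = 0) ∧
      (D ∘ₗ C = 0) ∧
      (Bp = 0) := by
  rintro ⟨Bm, C, D, A, b, a, Bp, ha, hS1, hsurj, hI, hII, hBp⟩
  -- Bm = -(C ∘ D), hence Bm² = 0
  have hBmeq : Bm = -(C ∘ₗ D) := by
    have := eq_neg_of_add_eq_zero_right hI
    exact this
  have hBm2 : ∀ x, Bm (Bm x) = 0 := by
    intro x
    have hDC : D (C (D x)) = 0 := by
      have := DFunLike.congr_fun hII (D x)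
      simpa using this
    rw [hBmeq]
    simp [LinearMap.comp_apply, hDC]
  -- A ∘ Bm = a ∘ b
  have hAB : ∀ x, A (Bm x) = a (b x) := by
    intro x
    have := DFunLike.congr_fun ha x
    rw [hBp] at this
    have h' : -(A ∘ₗ Bm) x + (a ∘ₗ b) x = 0 := by simpa using this
    have h'' : (A ∘ₗ Bm) x = (a ∘ₗ b) x := by
      have := neg_add_eq_zero.mp h'
      exact this
    simpa using h''
  -- (S1) applied to ker Bm ⊓ ker A ⊓ ker b
  set K : Submodule ℂ (Fin 5 → ℂ) := LinearMap.ker A ⊓ LinearMap.ker b with hK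
  have hS0 : LinearMap.ker Bm ⊓ K = ⊥ := by
    apply hS1
    · rintro y ⟨x, ⟨hx1, hx2⟩, rfl⟩
      have : Bm x = 0 := hx1
      rw [this]
      exact Submodule.zero_mem _
    · rw [Submodule.eq_bot_iff]
      rintro y ⟨x, ⟨hx1, ⟨hxA, hxb⟩⟩, rfl⟩
      exact hxA
    · rw [Submodule.eq_bot_iff]
      rintro y ⟨x, ⟨hx1, ⟨hxA, hxb⟩⟩, rfl⟩
      exact hxb
  -- dimensions
  have n5 : Module.finrank ℂ (Fin 5 → ℂ) = 5 := by simp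
  have n2 : Module.finrank ℂ (Fin 2 → ℂ) = 2 := by simp
  have hkA : Module.finrank ℂ (LinearMap.ker A) = 3 := by
    have h := LinearMap.finrank_range_add_finrank_ker A
    have hr : LinearMap.range A = ⊤ := LinearMap.range_eq_top.mpr hsurj
    rw [hr, finrank_top, n5, n2] at h
    omega
  have hkb : 4 ≤ Module.finrank ℂ (LinearMap.ker b) := by
    have h := LinearMap.finrank_range_add_finrank_ker b
    have hr : Module.finrank ℂ (LinearMap.range b) ≤ 1 := by
      have := Submodule.finrank_le (LinearMap.range b)
      simpa using this
    rw [n5] at h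
    omega
  have hKdim : 2 ≤ Module.finrank ℂ K := by
    have h := Submodule.finrank_sup_add_finrank_inf_eq (LinearMap.ker A) (LinearMap.ker b)
    have hle : Module.finrank ℂ ↥(LinearMap.ker A ⊔ LinearMap.ker b) ≤ 5 := by
      exact le_trans (Submodule.finrank_le _) (le_of_eq n5)
    rw [hkA] at h
    show 2 ≤ Module.finrank ℂ ↥(LinearMap.ker A ⊓ LinearMap.ker b)
    omega
  -- the map Bm restricted to K is injective with image P
  set P : Submodule ℂ (Fin 5 → ℂ) := K.map Bm with hP
  have hrange : LinearMap.range (Bm ∘ₗ K.subtype) = P := by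
    rw [LinearMap.range_comp, Submodule.range_subtype]
  have hker : LinearMap.ker (Bm ∘ₗ K.subtype) = ⊥ := by
    rw [Submodule.eq_bot_iff]
    rintro ⟨x, hx⟩ hx0
    have hxK : Bm x = 0 := by
      simpa [LinearMap.mem_ker] using hx0
    have : x ∈ LinearMap.ker Bm ⊓ K := ⟨hxK, hx⟩
    rw [hS0] at this
    have hx00 : x = 0 := by simpa using this
    exact Subtype.ext hx00
  have hPdim : Module.finrank ℂ P = Module.finrank ℂ K := by
    have h := LinearMap.finrank_range_add_finrank_ker (Bm ∘ₗ K.subtype)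
    rw [hrange, hker, finrank_bot] at h
    omega
  -- P and K both sit in ker A and intersect trivially
  have hPker : P ≤ LinearMap.ker A := by
    rintro y ⟨x, ⟨hxA, hxb⟩, rfl⟩
    have : b x = 0 := hxb
    have h2 := hAB x
    rw [this, map_zero] at h2
    exact h2
  have hKker : K ≤ LinearMap.ker A := inf_le_left
  have hPK : P ⊓ K = ⊥ := by
    have hPle : P ≤ LinearMap.ker Bm := by
      rintro y ⟨x, hx, rfl⟩
      exact hBm2 x
    rw [eq_bot_iff, ← hS0]
    exact inf_le_inf_right _ hPle
  have hsup : P ⊔ K ≤ LinearMap.ker A := sup_le hPker hKker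
  have h1 : Module.finrank ℂ ↥(P ⊔ K) ≤ 3 := by
    exact le_trans (Submodule.finrank_mono hsup) (le_of_eq hkA)
  have h2 := Submodule.finrank_sup_add_finrank_inf_eq P K
  rw [hPK, finrank_bot, hPdim] at h2
  omega
end

section
/- Let V be a 1-dimensional complex vector space and W a 2-dimensional complex vector space, and consider pairs (I, J) with I : W → V, J : V → W satisfying I∘J = 0 and J injective. The map sending (I,J) to (Im J, J∘I) induces a bijection between the set of GL(V)-orbits of such pairs (where g·(I,J) = (I g^{-1}, g J)) and the set of pairs (L, A) where L ⊆ W is a 1-dimensional subspace and A ∈ End(W) satisfies A(L) = 0 and Im A ⊆ L. -/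
/-- The map `(I,J) ↦ (Im J, J∘I)` induces a bijection between `GL(V)`-orbits of
pairs `(I,J)` with `I∘J = 0`, `J` injective (for `V = ℂ`, `W = ℂ²`) and pairs
`(L, A)` with `L ⊆ W` a line, `A(L) = 0`, `Im A ⊆ L`. -/
theorem stmt7 :
    -- well-definedness: the image lands in the target set
    (∀ (I : (Fin 2 → ℂ) →ₗ[ℂ] ℂ) (J : ℂ →ₗ[ℂ] (Fin 2 → ℂ)),
      I ∘ₗ J = 0 → Function.Injective J →
      Module.finrank ℂ (LinearMap.range J) = 1 ∧
      LinearMap.range J ≤ LinearMap.ker (J ∘ₗ I) ∧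
      LinearMap.range (J ∘ₗ I) ≤ LinearMap.range J) ∧
    -- surjectivity onto pairs (L, A)
    (∀ (L : Submodule ℂ (Fin 2 → ℂ)) (A : Module.End ℂ (Fin 2 → ℂ)),
      Module.finrank ℂ L = 1 → L ≤ LinearMap.ker A → LinearMap.range A ≤ L →
      ∃ (I : (Fin 2 → ℂ) →ₗ[ℂ] ℂ) (J : ℂ →ₗ[ℂ] (Fin 2 → ℂ)),
        I ∘ₗ J = 0 ∧ Function.Injective J ∧
        LinearMap.range J = L ∧ J ∘ₗ I = A) ∧
    -- two pairs have the same image iff they are in the same GL(V)-orbit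
    (∀ (I I' : (Fin 2 → ℂ) →ₗ[ℂ] ℂ) (J J' : ℂ →ₗ[ℂ] (Fin 2 → ℂ)),
      I ∘ₗ J = 0 → Function.Injective J →
      I' ∘ₗ J' = 0 → Function.Injective J' →
      ((LinearMap.range J = LinearMap.range J' ∧ J ∘ₗ I = J' ∘ₗ I') ↔
        ∃ g : ℂˣ, I' = (g : ℂ)⁻¹ • I ∧ J' = (g : ℂ) • J)) := by
  have hJsmul : ∀ (K : ℂ →ₗ[ℂ] (Fin 2 → ℂ)) (a : ℂ), K a = a • K 1 := by
    intro K a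
    conv_lhs => rw [← mul_one a, ← smul_eq_mul, map_smul]
  refine ⟨?_, ?_, ?_⟩
  · intro I J hIJ hJ
    refine ⟨?_, ?_, ?_⟩
    · rw [LinearMap.finrank_range_of_inj hJ, Module.finrank_self]
    · rintro x ⟨v, rfl⟩
      simp only [LinearMap.mem_ker, LinearMap.comp_apply]
      have : I (J v) = (I ∘ₗ J) v := rfl
      rw [this, hIJ]
      simp
    · rintro x ⟨v, rfl⟩
      exact ⟨I v, rfl⟩
  · intro L A hL hker hrange
    have b := Module.finBasisOfFinrankEq ℂ L hL
    set w : Fin 2 → ℂ := (b 0 : Fin 2 → ℂ) with hw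
    have hw0 : w ≠ 0 := by
      intro h
      exact b.ne_zero 0 (Subtype.ext h)
    -- every element of L is a multiple of w
    have hrep : ∀ l : L, (l : Fin 2 → ℂ) = (b.repr l 0) • w := by
      intro l
      conv_lhs => rw [← b.sum_repr l]
      simp only [Fin.sum_univ_one, SetLike.val_smul, hw]
    set J : ℂ →ₗ[ℂ] (Fin 2 → ℂ) := LinearMap.toSpanSingleton ℂ _ w with hJdef
    have hwL : w ∈ L := (b 0).2
    set I : (Fin 2 → ℂ) →ₗ[ℂ] ℂ :=
      (Finsupp.lapply 0) ∘ₗ (b.repr : L →ₗ[ℂ] (Fin 1 →₀ ℂ)) ∘ₗ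
        A.codRestrict L (fun x => hrange ⟨x, rfl⟩) with hIdef
    have hIx : ∀ x, (I x) • w = A x := by
      intro x
      have := hrep ⟨A x, hrange ⟨x, rfl⟩⟩
      simpa [hIdef, LinearMap.codRestrict] using this.symm
    refine ⟨I, J, ?_, ?_, ?_, ?_⟩
    · apply LinearMap.ext_ring
      have hAw : A w = 0 := hker hwL
      have h1 : (I w) • w = 0 := by rw [hIx, hAw]
      have h2 : I w = 0 := by
        rcases smul_eq_zero.mp h1 with h | h
        · exact h
        · exact absurd h hw0
      simp only [LinearMap.comp_apply, LinearMap.zero_apply]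
      have : J 1 = w := by simp [hJdef, LinearMap.toSpanSingleton_apply]
      rw [this, h2]
    · intro a a' h
      have h' : a • w = a' • w := h
      exact smul_left_injective ℂ hw0 h'
    · rw [hJdef, ← LinearMap.span_singleton_eq_range]
      apply le_antisymm
      · rw [Submodule.span_singleton_le_iff_mem]; exact hwL
      · intro l hl
        rw [Submodule.mem_span_singleton]
        exact ⟨b.repr ⟨l, hl⟩ 0, (hrep ⟨l, hl⟩).symm⟩
    · refine LinearMap.ext fun x => ?_
      simp only [LinearMap.comp_apply]
      rw [hJdef, LinearMap.toSpanSingleton_apply]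
      exact hIx x
  · intro I I' J J' hIJ hJ hIJ' hJ'
    constructor
    · rintro ⟨hr, hc⟩
      have h1 : J' 1 ∈ LinearMap.range J := by rw [hr]; exact ⟨1, rfl⟩
      obtain ⟨c, hcJ⟩ := h1
      have hc0 : c ≠ 0 := by
        rintro rfl
        simp only [map_zero] at hcJ
        exact one_ne_zero (hJ' (hcJ.symm.trans (map_zero J').symm))
      have key : ∀ x, I x = I' x * c := by
        intro x
        have h2 : J (I x) = J' (I' x) := by
          have := LinearMap.congr_fun hc x
          simpa using this
        have h3 : J' (I' x) = J (I' x * c) := by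
          rw [hJsmul J' (I' x), ← hcJ, hJsmul J c, hJsmul J (I' x * c),
            smul_smul]
        exact hJ (h2.trans h3)
      refine ⟨Units.mk0 c hc0, ?_, ?_⟩
      · refine LinearMap.ext fun x => ?_
        simp only [LinearMap.smul_apply, smul_eq_mul, Units.val_mk0]
        rw [key x]
        field_simp
      · apply LinearMap.ext_ring
        simp only [LinearMap.smul_apply, Units.val_mk0]
        rw [← hcJ, hJsmul J c]
    · rintro ⟨g, rfl, rfl⟩
      constructor
      · ext y
        simp only [LinearMap.mem_range, LinearMap.smul_apply]
        constructor
        · rintro ⟨a, rfl⟩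
          refine ⟨(g : ℂ)⁻¹ * a, ?_⟩
          rw [← smul_eq_mul, map_smul, smul_smul, mul_inv_cancel₀ g.ne_zero,
            one_smul]
        · rintro ⟨a, rfl⟩
          refine ⟨(g : ℂ) * a, ?_⟩
          rw [← smul_eq_mul, map_smul]
      · refine LinearMap.ext fun x => ?_
        simp only [LinearMap.comp_apply, LinearMap.smul_apply, smul_eq_mul]
        rw [← smul_eq_mul, map_smul, smul_smul, mul_inv_cancel₀ g.ne_zero,
          one_smul]
end
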